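/- There exists a constant c > 0 such that for every positive integer N and every t ∈ ℝ, |(∑_{n=1}^{N} 1/n)^{−1} ∑_{n=1}^{N} e^{2πint}/n| ≤ min{1, c · log(1 + ‖t‖^{−1}) / log(1+N)}. Moreover, there exist constants c' > 0 and c'' > 0 such that for all sufficiently large N and all t with ‖t‖ ≥ c''/N, the reverse inequality |(∑_{n=1}^{N} 1/n)^{−1} ∑_{n=1}^{N} e^{2πint}/n| ≥ c' · log(1 + ‖t‖^{−1}) / log(1+N) holds. -/

import Mathlib

open MeasureTheory Filter Finset
open scoped Real ENNReal Topology BigOperators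

noncomputable section

/-- Distance from a real number to the nearest integer. -/
def dnint (t : ℝ) : ℝ := |t - (round t : ℝ)|

/-- Euclidean norm of an integer vector. -/
def znorm {d : ℕ} (m : Fin d → ℤ) : ℝ := Real.sqrt (∑ i, ((m i : ℝ)) ^ 2)

/-- A function on `ℝ^d` which is `ℤ^d`-periodic (i.e. a function on the torus `𝕋^d`). -/
def ZdPeriodic {d : ℕ} (f : (Fin d → ℝ) → ℂ) : Prop :=
  ∀ (x : Fin d → ℝ) (k : Fin d → ℤ), f (x + fun i => (k i : ℝ)) = f x

/-- The unit cube, a fundamental domain of the torus `𝕋^d`. -/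
def cube (d : ℕ) : Set (Fin d → ℝ) := Set.Icc 0 1

/-- Fourier coefficient of a (periodic) function. -/
def fcoef {d : ℕ} (f : (Fin d → ℝ) → ℂ) (m : Fin d → ℤ) : ℂ :=
  ∫ x in cube d,
    f x * Complex.exp (-(2 * Real.pi * Complex.I * ((∑ i, (m i : ℝ) * x i : ℝ) : ℂ)))

/-- Membership in the Sobolev space `W^{δ,2}(𝕋^d)`. -/
def MemSobolev {d : ℕ} (δ : ℝ) (f : (Fin d → ℝ) → ℂ) : Prop :=
  Summable (fun m : Fin d → ℤ => (1 + znorm m ^ 2) ^ δ * ‖fcoef f m‖ ^ 2)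

/-- The Sobolev norm `‖f‖_{δ,2}`. -/
def sobNorm {d : ℕ} (δ : ℝ) (f : (Fin d → ℝ) → ℂ) : ℝ :=
  Real.sqrt (∑' m : Fin d → ℤ, (1 + znorm m ^ 2) ^ δ * ‖fcoef f m‖ ^ 2)

/-- The kernel `∑_{n ∈ ℤ} Φ(N,n) e^{2πint}` of the summation method. -/
def kern (Φ : ℕ → ℤ → ℂ) (N : ℕ) (t : ℝ) : ℂ :=
  ∑' n : ℤ, Φ N n * Complex.exp (2 * Real.pi * Complex.I * (n : ℂ) * (t : ℂ))

/-- The weighted discrepancy `D_N^{Φ,α} f(x)`. -/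
def disc {d : ℕ} (Φ : ℕ → ℤ → ℂ) (α : Fin d → ℝ) (f : (Fin d → ℝ) → ℂ)
    (N : ℕ) (x : Fin d → ℝ) : ℂ :=
  (∑' n : ℤ, Φ N n * f (x + n • α)) - ∫ y in cube d, f y

/-- `α ∈ ℝ^d` is an irrational vector: `1, α₁, …, α_d` are linearly independent over `ℚ`. -/
def IrrationalVec {d : ℕ} (α : Fin d → ℝ) : Prop :=
  ∀ (m : Fin d → ℤ) (k : ℤ), (∑ i, (m i : ℝ) * α i) + (k : ℝ) = 0 → m = 0 ∧ k = 0

/-- The normalized logarithmic kernel `(∑_{n=1}^N 1/n)^{-1} ∑_{n=1}^N e^{2πint}/n`. -/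
def logKern (N : ℕ) (t : ℝ) : ℂ :=
  (((∑ n ∈ Finset.Icc 1 N, (1 : ℝ) / n) : ℝ) : ℂ)⁻¹ *
    ∑ n ∈ Finset.Icc 1 N,
      Complex.exp (2 * Real.pi * Complex.I * (n : ℂ) * (t : ℂ)) / (n : ℂ)

private lemma exp_pow_ge (n : ℕ) : (2.7182818283:ℝ) ^ n ≤ Real.exp n := by
  rw [show ((n:ℝ)) = ((n:ℕ):ℝ) * 1 by ring, Real.exp_nat_mul]
  exact pow_le_pow_left₀ (by norm_num) Real.exp_one_gt_d9.le n

private lemma exp_pow_le (n : ℕ) : Real.exp n ≤ (2.7182818286:ℝ) ^ n := by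
  rw [show ((n:ℝ)) = ((n:ℕ):ℝ) * 1 by ring, Real.exp_nat_mul]
  exact pow_le_pow_left₀ (Real.exp_pos 1).le Real.exp_one_lt_d9.le n

private lemma log_le_of_exp_le {a x : ℝ} (hx : 0 < x) (h : x ≤ Real.exp a) : Real.log x ≤ a := by
  rw [Real.log_le_iff_le_exp hx]; exact h

private lemma le_log_of_le_exp {a x : ℝ} (hx : 0 < x) (h : Real.exp a ≤ x) : a ≤ Real.log x := by
  rw [Real.le_log_iff_exp_le hx]; exact h

private lemma two_le_exp_07 : (2:ℝ) ≤ Real.exp 0.7 := by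
  have h1 : (1024:ℝ) ≤ Real.exp 7 :=
    le_trans (by norm_num : (1024:ℝ) ≤ 2.7182818283 ^ (7:ℕ)) (exp_pow_ge 7)
  have h2 : Real.exp (7:ℝ) = (Real.exp 0.7)^(10:ℕ) := by
    rw [← Real.exp_nat_mul]; norm_num
  have h3 : (2:ℝ)^(10:ℕ) ≤ (Real.exp 0.7)^(10:ℕ) := by
    rw [← h2]; norm_num; linarith
  exact le_of_pow_le_pow_left₀ (by norm_num) (Real.exp_pos _).le h3

private lemma log_two_le : Real.log 2 ≤ 0.7 := log_le_of_exp_le (by norm_num) two_le_exp_07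

private lemma exp5_le : Real.exp 5 ≤ 160 := by
  have := exp_pow_le 5
  norm_num at this ⊢
  linarith

private lemma exp6_ge : (161:ℝ) ≤ Real.exp 6 := by
  have := exp_pow_ge 6
  norm_num at this ⊢
  linarith

private lemma exp1_le_3 : Real.exp 1 ≤ 3 := by
  have := Real.exp_one_lt_d9
  linarith


private lemma abel_key (w : ℂ) (hw : ‖w‖ ≤ 1) (M : ℕ) :
    ∀ N, M + 1 ≤ N →
      ‖(1 - w) * (∑ n ∈ Finset.Ioc M N, w ^ n / (n : ℂ)) - w ^ (M + 1) / ((M : ℂ) + 1)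
          + w ^ (N + 1) / (N : ℂ)‖
        ≤ 1 / ((M : ℝ) + 1) - 1 / (N : ℝ) := by
  intro N hN
  induction N, hN using Nat.le_induction with
  | base =>
      have h0 : Finset.Ioc M (M + 1) = {M + 1} := by
        ext x
        simp only [Finset.mem_Ioc, Finset.mem_singleton]
        omega
      rw [h0, Finset.sum_singleton]
      have hM : ((M : ℂ) + 1) ≠ 0 := Nat.cast_add_one_ne_zero M
      have : (1 - w) * (w ^ (M + 1) / ((M + 1 : ℕ) : ℂ)) - w ^ (M + 1) / ((M : ℂ) + 1)
          + w ^ (M + 1 + 1) / ((M + 1 : ℕ) : ℂ) = 0 := by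
        push_cast
        field_simp
        ring
      rw [this]
      simp
  | succ N hN ih =>
      have hNpos : 0 < N := by omega
      have hNc : (N : ℂ) ≠ 0 := by exact_mod_cast hNpos.ne'
      have hN1c : ((N : ℂ) + 1) ≠ 0 := Nat.cast_add_one_ne_zero N
      rw [Finset.sum_Ioc_succ_top (by omega : M ≤ N)]
      have key : (1 - w) * ((∑ n ∈ Finset.Ioc M N, w ^ n / (n : ℂ)) + w ^ (N + 1) / ((N + 1 : ℕ) : ℂ))
            - w ^ (M + 1) / ((M : ℂ) + 1) + w ^ (N + 1 + 1) / ((N + 1 : ℕ) : ℂ)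
          = ((1 - w) * (∑ n ∈ Finset.Ioc M N, w ^ n / (n : ℂ)) - w ^ (M + 1) / ((M : ℂ) + 1)
              + w ^ (N + 1) / (N : ℂ))
            + (((1 / ((N : ℝ) + 1) - 1 / (N : ℝ) : ℝ) : ℂ) * w ^ (N + 1)) := by
        push_cast
        field_simp
        ring
      rw [key]
      refine (norm_add_le _ _).trans ?_
      have h2 : ‖((1 / ((N : ℝ) + 1) - 1 / (N : ℝ) : ℝ) : ℂ) * w ^ (N + 1)‖
          ≤ 1 / (N : ℝ) - 1 / ((N : ℝ) + 1) := by
        rw [norm_mul, Complex.norm_real]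
        have h3 : ‖w ^ (N + 1)‖ ≤ 1 := by
          rw [norm_pow]; exact pow_le_one₀ (norm_nonneg w) hw
        have h4 : |1 / ((N : ℝ) + 1) - 1 / (N : ℝ)| = 1 / (N : ℝ) - 1 / ((N : ℝ) + 1) := by
          rw [abs_sub_comm, abs_of_nonneg]
          have : (0:ℝ) < N := by exact_mod_cast hNpos
          have : 1 / ((N : ℝ) + 1) ≤ 1 / (N : ℝ) := by
            apply one_div_le_one_div_of_le this; linarith
          linarith
        calc |1 / ((N : ℝ) + 1) - 1 / (N : ℝ)| * ‖w ^ (N + 1)‖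
            ≤ |1 / ((N : ℝ) + 1) - 1 / (N : ℝ)| * 1 := by
              apply mul_le_mul_of_nonneg_left h3 (abs_nonneg _)
          _ = 1 / (N : ℝ) - 1 / ((N : ℝ) + 1) := by rw [mul_one, h4]
      have := add_le_add ih h2
      refine this.trans ?_
      push_cast
      linarith


private lemma norm_nat_cast_add_one (M : ℕ) : ‖(M : ℂ) + 1‖ = (M : ℝ) + 1 := by
  rw [show ((M : ℂ) + 1) = (((M : ℝ) + 1 : ℝ) : ℂ) by push_cast; ring,
    Complex.norm_real, Real.norm_eq_abs, abs_of_pos (by positivity)]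

private lemma abel_bound (w : ℂ) (hw : ‖w‖ ≤ 1) (M N : ℕ) :
    ‖(1 - w) * ∑ n ∈ Finset.Ioc M N, w ^ n / (n : ℂ)‖ ≤ 2 / ((M : ℝ) + 1) := by
  rcases le_or_gt N M with h | h
  · rw [Finset.Ioc_eq_empty (by omega)]
    simp
    positivity
  · have hMN : M + 1 ≤ N := h
    have hNpos : 0 < N := by omega
    have key := abel_key w hw M N hMN
    have hwpow : ∀ k : ℕ, ‖w ^ k‖ ≤ 1 := fun k => by
      rw [norm_pow]; exact pow_le_one₀ (norm_nonneg w) hw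
    have hM1 : (0:ℝ) < (M:ℝ) + 1 := by positivity
    have hN1 : (0:ℝ) < (N:ℝ) := by exact_mod_cast hNpos
    have e1 : ‖w ^ (M + 1) / ((M : ℂ) + 1)‖ ≤ 1 / ((M : ℝ) + 1) := by
      rw [norm_div, norm_nat_cast_add_one]
      gcongr
      exact hwpow _
    have e2 : ‖w ^ (N + 1) / (N : ℂ)‖ ≤ 1 / (N : ℝ) := by
      rw [norm_div, Complex.norm_natCast]
      gcongr
      exact hwpow _
    have split : (1 - w) * ∑ n ∈ Finset.Ioc M N, w ^ n / (n : ℂ)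
        = ((1 - w) * (∑ n ∈ Finset.Ioc M N, w ^ n / (n : ℂ)) - w ^ (M + 1) / ((M : ℂ) + 1)
          + w ^ (N + 1) / (N : ℂ)) + w ^ (M + 1) / ((M : ℂ) + 1) - w ^ (N + 1) / (N : ℂ) := by
      ring
    rw [split]
    calc ‖_ + w ^ (M + 1) / ((M : ℂ) + 1) - w ^ (N + 1) / (N : ℂ)‖
        ≤ ‖_ + w ^ (M + 1) / ((M : ℂ) + 1)‖ + ‖w ^ (N + 1) / (N : ℂ)‖ := norm_sub_le _ _
      _ ≤ (‖_‖ + ‖w ^ (M + 1) / ((M : ℂ) + 1)‖) + ‖w ^ (N + 1) / (N : ℂ)‖ := by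
          gcongr; exact norm_add_le _ _
      _ ≤ ((1 / ((M : ℝ) + 1) - 1 / (N : ℝ)) + 1 / ((M : ℝ) + 1)) + 1 / (N : ℝ) := by
          gcongr
      _ = 2 / ((M : ℝ) + 1) := by ring

private lemma sum_Ioc_bound (w : ℂ) (hw : ‖w‖ ≤ 1) (hw1 : w ≠ 1) (M N : ℕ) :
    ‖∑ n ∈ Finset.Ioc M N, w ^ n / (n : ℂ)‖ ≤ 2 / (((M : ℝ) + 1) * ‖1 - w‖) := by
  have h1 : (0:ℝ) < ‖1 - w‖ := by
    rw [norm_pos_iff]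
    intro h
    apply hw1
    have : (1:ℂ) - w = 0 := h
    linear_combination -this
  have := abel_bound w hw M N
  rw [norm_mul] at this
  rw [div_mul_eq_div_div, le_div_iff₀ h1]
  calc ‖∑ n ∈ Finset.Ioc M N, w ^ n / (n : ℂ)‖ * ‖1 - w‖
      = ‖1 - w‖ * ‖∑ n ∈ Finset.Ioc M N, w ^ n / (n : ℂ)‖ := by ring
    _ ≤ 2 / ((M : ℝ) + 1) := this


private lemma log_tail (w : ℂ) (hw : ‖w‖ < 1) (N : ℕ) :
    ‖(-Complex.log (1 - w)) - ∑ n ∈ Finset.Icc 1 N, w ^ n / (n : ℂ)‖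
      ≤ 2 / (((N : ℝ) + 1) * ‖1 - w‖) := by
  have hw1 : w ≠ 1 := by intro h; rw [h] at hw; simp at hw
  have hsum := Complex.hasSum_taylorSeries_neg_log hw
  have heq : ∀ M : ℕ, ∑ n ∈ Finset.range (M + 1), w ^ n / (n : ℂ)
      = ∑ n ∈ Finset.Icc 1 M, w ^ n / (n : ℂ) := by
    intro M
    rw [Finset.sum_range_succ']
    simp only [Nat.cast_zero, div_zero, pow_zero, add_zero]
    conv_rhs => rw [← Finset.Ico_add_one_right_eq_Icc, Finset.sum_Ico_eq_sum_range]
    exact Finset.sum_congr (by norm_num) fun i _ => by rw [add_comm i 1]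
  have htend : Filter.Tendsto (fun M : ℕ => ∑ n ∈ Finset.Icc 1 M, w ^ n / (n : ℂ))
      Filter.atTop (nhds (-Complex.log (1 - w))) := by
    have h1 := hsum.tendsto_sum_nat.comp (Filter.tendsto_add_atTop_nat 1)
    exact Filter.Tendsto.congr heq h1
  have h2 : Filter.Tendsto
      (fun M : ℕ => ‖(∑ n ∈ Finset.Icc 1 M, w ^ n / (n : ℂ))
        - ∑ n ∈ Finset.Icc 1 N, w ^ n / (n : ℂ)‖)
      Filter.atTop (nhds ‖(-Complex.log (1 - w)) - ∑ n ∈ Finset.Icc 1 N, w ^ n / (n : ℂ)‖) :=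
    (htend.sub tendsto_const_nhds).norm
  refine le_of_tendsto h2 ?_
  filter_upwards [Filter.eventually_ge_atTop N] with M hM
  have : ∑ n ∈ Finset.Icc 1 M, w ^ n / (n : ℂ)
      = (∑ n ∈ Finset.Icc 1 N, w ^ n / (n : ℂ)) + ∑ n ∈ Finset.Ioc N M, w ^ n / (n : ℂ) := by
    have hi : ∀ m : ℕ, Finset.Icc 1 m = Finset.Ioc 0 m := fun m => by
      ext x; simp [Nat.lt_iff_add_one_le]
    rw [hi, hi]
    exact (Finset.sum_Ioc_consecutive _ (Nat.zero_le N) hM).symm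
  rw [this, add_sub_cancel_left]
  exact sum_Ioc_bound w hw.le hw1 N M


private lemma norm_one_sub_e (s : ℝ) (h0 : 0 ≤ s) (h1 : s ≤ 1) :
    ‖1 - Complex.exp (2 * Real.pi * Complex.I * s)‖ = 2 * Real.sin (Real.pi * s) := by
  have hz : Complex.exp (2 * Real.pi * Complex.I * s)
      = Complex.cos (2*Real.pi*s) + Complex.sin (2*Real.pi*s) * Complex.I := by
    rw [show ((2:ℂ) * Real.pi * Complex.I * s) = ((2*Real.pi*s : ℝ):ℂ) * Complex.I by
      push_cast; ring, Complex.exp_mul_I]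
    norm_num
  rw [hz]
  have hre : (1 - (Complex.cos (2*Real.pi*s) + Complex.sin (2*Real.pi*s) * Complex.I))
      = (((1 - Real.cos (2*Real.pi*s)) : ℝ) : ℂ) + ((-Real.sin (2*Real.pi*s) : ℝ) : ℂ) * Complex.I := by
    rw [Complex.ofReal_sub, Complex.ofReal_cos, Complex.ofReal_neg, Complex.ofReal_sin]
    push_cast
    ring
  rw [hre]
  rw [Complex.norm_def, Complex.normSq_apply]
  simp only [Complex.add_re, Complex.ofReal_re, Complex.mul_re, Complex.I_re, Complex.I_im,
    Complex.ofReal_im, Complex.add_im, Complex.mul_im]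
  ring_nf
  have key : 1 - Real.cos (Real.pi*s*2) * 2 + (Real.cos (Real.pi*s*2))^2 + (Real.sin (Real.pi*s*2))^2
      = (2 * Real.sin (Real.pi * s))^2 := by
    have h2 : Real.sin (Real.pi*s*2) ^ 2 = 1 - Real.cos (Real.pi*s*2) ^ 2 := Real.sin_sq _
    have h3 : Real.sin (Real.pi*s) ^ 2 = 1/2 - Real.cos (2*(Real.pi*s))/2 := Real.sin_sq_eq_half_sub _
    rw [h2]
    rw [show Real.pi*s*2 = 2*(Real.pi*s) by ring]
    nlinarith [h3]
  rw [key, Real.sqrt_sq (by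
    have := Real.sin_nonneg_of_nonneg_of_le_pi (x := Real.pi * s) (by positivity)
      (by nlinarith [Real.pi_pos])
    linarith : (0:ℝ) ≤ 2 * Real.sin (Real.pi*s))]
  ring


private def ee (t : ℝ) : ℂ := Complex.exp (2 * Real.pi * Complex.I * t)

private lemma norm_ee (t : ℝ) : ‖ee t‖ = 1 := by
  rw [ee, Complex.norm_exp]
  have : (2 * (Real.pi:ℂ) * Complex.I * t).re = 0 := by simp
  rw [this, Real.exp_zero]

private lemma ee_pow (n : ℕ) (t : ℝ) :
    Complex.exp (2 * Real.pi * Complex.I * (n : ℂ) * (t : ℂ)) = (ee t) ^ n := by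
  rw [ee, ← Complex.exp_nat_mul]
  ring_nf

private lemma ee_eq_ee_sub_round (t : ℝ) : ee t = ee (t - round t) := by
  rw [ee, ee]
  have : (2 * (Real.pi:ℂ) * Complex.I * t)
      = 2 * (Real.pi:ℂ) * Complex.I * ((t - round t : ℝ) : ℂ) + (round t : ℂ) * (2 * Real.pi * Complex.I) := by
    push_cast; ring
  rw [this, Complex.exp_add, Complex.exp_int_mul_two_pi_mul_I, mul_one]

private lemma ee_neg (u : ℝ) : ee (-u) = starRingEnd ℂ (ee u) := by
  rw [ee, ee, ← Complex.exp_conj]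
  congr 1
  have : starRingEnd ℂ (2 * (Real.pi:ℂ) * Complex.I * (u:ℂ))
      = 2 * (Real.pi:ℂ) * Complex.I * ((-u : ℝ):ℂ) := by
    simp only [map_mul, Complex.conj_I, Complex.conj_ofReal, map_ofNat]
    push_cast
    ring
  rw [← this]

private lemma norm_S_dnint (N : ℕ) (t : ℝ) :
    ‖∑ n ∈ Finset.Icc 1 N, (ee t) ^ n / (n : ℂ)‖
      = ‖∑ n ∈ Finset.Icc 1 N, (ee (dnint t)) ^ n / (n : ℂ)‖ := by
  rw [show (∑ n ∈ Finset.Icc 1 N, (ee t) ^ n / (n : ℂ))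
      = ∑ n ∈ Finset.Icc 1 N, (ee (t - round t)) ^ n / (n : ℂ) by
    rw [← ee_eq_ee_sub_round]]
  rcases le_or_gt 0 (t - (round t : ℝ)) with h | h
  · rw [dnint, abs_of_nonneg h]
  · rw [dnint, abs_of_neg h]
    rw [show (-(t - (round t : ℝ))) = -(t - round t) from rfl]
    rw [ee_neg]
    rw [show (∑ n ∈ Finset.Icc 1 N, (ee (t - round t)) ^ n / (n : ℂ))
        = starRingEnd ℂ (∑ n ∈ Finset.Icc 1 N, (starRingEnd ℂ (ee (t - round t))) ^ n / (n : ℂ)) by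
      rw [map_sum]
      refine Finset.sum_congr rfl fun n _ => ?_
      rw [map_div₀, map_pow, RingHomCompTriple.comp_apply]
      simp]
    rw [RCLike.norm_conj]
private lemma norm_logKern (N : ℕ) (t : ℝ) :
    ‖logKern N t‖ = (∑ n ∈ Finset.Icc 1 N, (1 : ℝ) / n)⁻¹
      * ‖∑ n ∈ Finset.Icc 1 N, (ee (dnint t)) ^ n / (n : ℂ)‖ := by
  have hH : (0:ℝ) ≤ ∑ n ∈ Finset.Icc 1 N, (1 : ℝ) / n := by positivity
  rw [logKern]
  rw [show (∑ n ∈ Finset.Icc 1 N,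
      Complex.exp (2 * Real.pi * Complex.I * (n : ℂ) * (t : ℂ)) / (n : ℂ))
      = ∑ n ∈ Finset.Icc 1 N, (ee t) ^ n / (n : ℂ) by
    exact Finset.sum_congr rfl fun n _ => by rw [ee_pow]]
  rw [norm_mul, norm_inv, Complex.norm_real, Real.norm_eq_abs, abs_of_nonneg hH,
    norm_S_dnint]


private lemma Hsum_eq (N : ℕ) : ∑ n ∈ Finset.Icc 1 N, (1:ℝ)/n = ((harmonic N : ℚ) : ℝ) := by
  rw [harmonic_eq_sum_Icc]
  push_cast
  exact Finset.sum_congr rfl fun n _ => (one_div _)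

private lemma Hsum_le (N : ℕ) (hN : 1 ≤ N) :
    ∑ n ∈ Finset.Icc 1 N, (1:ℝ)/n ≤ 1 + Real.log N := by
  rw [Hsum_eq]; exact harmonic_le_one_add_log N

private lemma le_Hsum (N : ℕ) : Real.log (N + 1) ≤ ∑ n ∈ Finset.Icc 1 N, (1:ℝ)/n := by
  rw [Hsum_eq]
  have := log_add_one_le_harmonic N
  rwa [Nat.cast_add, Nat.cast_one] at this

private lemma Hsum_pos (N : ℕ) (hN : 1 ≤ N) : 0 < ∑ n ∈ Finset.Icc 1 N, (1:ℝ)/n := by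
  have h2 : (0:ℝ) < Real.log (N + 1) := by
    apply Real.log_pos
    have : (1:ℝ) ≤ N := by exact_mod_cast hN
    linarith
  linarith [le_Hsum N]

private lemma norm_one_sub_ee_ge (s : ℝ) (h0 : 0 ≤ s) (h1 : s ≤ 1/2) :
    4 * s ≤ ‖1 - ee s‖ := by
  rw [ee, norm_one_sub_e s h0 (by linarith)]
  have := Real.mul_le_sin (x := Real.pi * s) (by positivity)
    (by nlinarith [Real.pi_pos])
  have hpi : 2 / Real.pi * (Real.pi * s) = 2 * s := by
    field_simp
  rw [hpi] at this
  linarith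

private lemma norm_one_sub_ee_le (s : ℝ) (h0 : 0 ≤ s) (h1 : s ≤ 1/2) :
    ‖1 - ee s‖ ≤ 2 * Real.pi * s := by
  rw [ee, norm_one_sub_e s h0 (by linarith)]
  have := Real.sin_le (by positivity : 0 ≤ Real.pi * s)
  linarith

private lemma S_head (M : ℕ) (z : ℂ) (hz : ‖z‖ = 1) :
    ‖∑ n ∈ Finset.Icc 1 M, z ^ n / (n : ℂ)‖ ≤ ∑ n ∈ Finset.Icc 1 M, (1:ℝ)/n := by
  refine (norm_sum_le _ _).trans ?_
  apply Finset.sum_le_sum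
  intro n hn
  rw [norm_div, norm_pow, hz, one_pow, Complex.norm_natCast]

private lemma S_upper (N : ℕ) (hN : 1 ≤ N) (s : ℝ) (hs0 : 0 < s) (hs2 : s ≤ 1/2) :
    ‖∑ n ∈ Finset.Icc 1 N, (ee s) ^ n / (n : ℂ)‖ ≤ 5/2 * Real.log (1 + s⁻¹) := by
  have hs2' : (2:ℝ) ≤ s⁻¹ := by
    rw [le_inv_comm₀ (by norm_num) hs0]; linarith
  have hzne : ee s ≠ 1 := by
    intro h
    have h2 := norm_one_sub_ee_ge s hs0.le hs2
    rw [h] at h2; simp at h2; linarith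
  set M : ℕ := min N (Nat.floor s⁻¹) with hMdef
  have hM2 : 1 ≤ M := by
    refine le_min hN ?_
    have : (1:ℕ) ≤ Nat.floor s⁻¹ := Nat.le_floor (by exact_mod_cast (by linarith : (1:ℝ) ≤ s⁻¹))
    exact this
  have hMN : M ≤ N := min_le_left _ _
  have hMle : (M:ℝ) ≤ s⁻¹ := by
    have : (Nat.floor s⁻¹ : ℝ) ≤ s⁻¹ := Nat.floor_le (by positivity)
    have h2 : (M:ℝ) ≤ (Nat.floor s⁻¹ : ℝ) := by exact_mod_cast min_le_right N _
    linarith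
  -- split
  have hsplit : ∑ n ∈ Finset.Icc 1 N, (ee s) ^ n / (n : ℂ)
      = (∑ n ∈ Finset.Icc 1 M, (ee s) ^ n / (n : ℂ))
        + ∑ n ∈ Finset.Ioc M N, (ee s) ^ n / (n : ℂ) := by
    have hi : ∀ m : ℕ, Finset.Icc 1 m = Finset.Ioc 0 m := fun m => by
      ext x; simp [Nat.lt_iff_add_one_le]
    rw [hi, hi]
    exact (Finset.sum_Ioc_consecutive _ (Nat.zero_le M) hMN).symm
  -- head bound
  have hhead : ‖∑ n ∈ Finset.Icc 1 M, (ee s) ^ n / (n : ℂ)‖ ≤ 1 + Real.log s⁻¹ := by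
    refine (S_head M _ (norm_ee s)).trans ?_
    refine (Hsum_le M hM2).trans ?_
    have : Real.log M ≤ Real.log s⁻¹ :=
      Real.log_le_log (by exact_mod_cast hM2) hMle
    linarith
  -- tail bound
  have htail : ‖∑ n ∈ Finset.Ioc M N, (ee s) ^ n / (n : ℂ)‖ ≤ 1/2 := by
    rcases le_or_gt N (Nat.floor s⁻¹) with h | h
    · have : M = N := by rw [hMdef]; omega
      rw [this]
      simp
    · have hMfl : M = Nat.floor s⁻¹ := by rw [hMdef]; omega
      have hM1s : s⁻¹ ≤ (M:ℝ) + 1 := by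
        rw [hMfl]
        exact (Nat.lt_floor_add_one s⁻¹).le
      refine (sum_Ioc_bound (ee s) (by rw [norm_ee]) hzne M N).trans ?_
      have h4 : 4 * s ≤ ‖1 - ee s‖ := norm_one_sub_ee_ge s hs0.le hs2
      have hpos : (0:ℝ) < ((M:ℝ)+1) * ‖1 - ee s‖ := by
        have : (0:ℝ) < ‖1 - ee s‖ := by nlinarith
        positivity
      rw [div_le_div_iff₀ hpos (by norm_num)]
      have : s⁻¹ * (4 * s) ≤ ((M:ℝ) + 1) * ‖1 - ee s‖ := by
        apply mul_le_mul hM1s h4 (by linarith) (by linarith)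
      have h44 : s⁻¹ * (4 * s) = 4 := by field_simp
      rw [h44] at this
      linarith
  -- combine
  have hlog1 : Real.log s⁻¹ ≤ Real.log (1 + s⁻¹) := Real.log_le_log (by positivity) (by linarith)
  have hlog2 : (1:ℝ) ≤ Real.log (1 + s⁻¹) := by
    have : Real.exp 1 ≤ 1 + s⁻¹ := by linarith [exp1_le_3]
    calc (1:ℝ) = Real.log (Real.exp 1) := (Real.log_exp 1).symm
      _ ≤ Real.log (1 + s⁻¹) := Real.log_le_log (Real.exp_pos 1) this
  calc ‖∑ n ∈ Finset.Icc 1 N, (ee s) ^ n / (n : ℂ)‖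
      ≤ ‖∑ n ∈ Finset.Icc 1 M, (ee s) ^ n / (n : ℂ)‖
        + ‖∑ n ∈ Finset.Ioc M N, (ee s) ^ n / (n : ℂ)‖ := by rw [hsplit]; exact norm_add_le _ _
    _ ≤ (1 + Real.log s⁻¹) + 1/2 := add_le_add hhead htail
    _ ≤ 5/2 * Real.log (1 + s⁻¹) := by linarith


set_option maxHeartbeats 1000000 in
private lemma S_lower (N : ℕ) (hN : 48 ≤ N) (s : ℝ) (hs1 : 24 / N ≤ s) (hs2 : s ≤ 1/2) :
    1/25 * Real.log (1 + s⁻¹) ≤ ‖∑ n ∈ Finset.Icc 1 N, (ee s) ^ n / (n : ℂ)‖ := by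
  have hNr : (48:ℝ) ≤ (N:ℝ) := by exact_mod_cast hN
  have hNpos : (0:ℝ) < N := by linarith
  have hs0 : 0 < s := lt_of_lt_of_le (by positivity) hs1
  have hsN : 24 ≤ s * N := by
    rw [div_le_iff₀ hNpos] at hs1; linarith
  obtain ⟨r, hrdef⟩ : ∃ r : ℝ, r = 1 - 1/(N:ℝ)^2 := ⟨_, rfl⟩
  have hrN : 1/(N:ℝ)^2 ≤ s := by
    rw [div_le_iff₀ (by positivity)]
    nlinarith
  have hrNs : 1/(N:ℝ)^2 ≤ 1/2304 := by
    rw [div_le_div_iff₀ (by positivity) (by norm_num)]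
    nlinarith
  have hr0 : (3:ℝ)/4 ≤ r := by rw [hrdef]; nlinarith
  have hr0' : (0:ℝ) < r := lt_of_lt_of_le (by norm_num) hr0
  have hr1 : r < 1 := by
    have h9 : 0 < 1/(N:ℝ)^2 := by positivity
    rw [hrdef]
    linarith
  have hr1N : 1 - r = 1/(N:ℝ)^2 := by rw [hrdef]; ring
  obtain ⟨w, hwdef⟩ : ∃ w : ℂ, w = (r:ℝ) * ee s := ⟨_, rfl⟩
  have hwn : ‖w‖ = r := by
    rw [hwdef, norm_mul, norm_ee, mul_one, Complex.norm_real, Real.norm_eq_abs,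
      abs_of_pos hr0']
  have hwlt : ‖w‖ < 1 := by rw [hwn]; exact hr1
  have hesw : ee s - w = ((1 - r : ℝ):ℂ) * ee s := by rw [hwdef]; push_cast; ring
  have hnesw : ‖ee s - w‖ = 1/(N:ℝ)^2 := by
    have h9 : 0 < 1 - r := by linarith
    rw [hesw, norm_mul, norm_ee, mul_one, Complex.norm_real, Real.norm_eq_abs,
      abs_of_pos h9, hr1N]
  have hsplit1 : ‖1 - ee s‖ ≤ ‖1 - w‖ + ‖ee s - w‖ := by
    calc ‖1 - ee s‖ = ‖(1 - w) - (ee s - w)‖ := by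
          rw [show (1:ℂ) - ee s = (1-w) - (ee s - w) by ring]
      _ ≤ _ := norm_sub_le _ _
  have h1w_low : 3 * s ≤ ‖1 - w‖ := by
    have := norm_one_sub_ee_ge s hs0.le hs2
    rw [hnesw] at hsplit1
    linarith
  have h1w_up : ‖1 - w‖ ≤ 8 * s := by
    have h1 : ‖1 - w‖ ≤ ‖1 - ee s‖ + ‖ee s - w‖ := by
      calc ‖1 - w‖ = ‖(1 - ee s) + (ee s - w)‖ := by
            rw [show (1:ℂ) - w = (1 - ee s) + (ee s - w) by ring]
        _ ≤ _ := norm_add_le _ _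
    have h2 := norm_one_sub_ee_le s hs0.le hs2
    have hpi := Real.pi_lt_d2
    rw [hnesw] at h1
    nlinarith
  have h1wpos : (0:ℝ) < ‖1 - w‖ := by linarith
  obtain ⟨L, hLdef⟩ : ∃ L : ℂ, L = -Complex.log (1 - w) := ⟨_, rfl⟩
  have htail : ‖L - ∑ n ∈ Finset.Icc 1 N, w ^ n / (n : ℂ)‖ ≤ 1/36 := by
    rw [hLdef]
    refine (log_tail w hwlt N).trans ?_
    rw [div_le_div_iff₀ (by positivity) (by norm_num)]
    nlinarith
  have hdiff : ‖(∑ n ∈ Finset.Icc 1 N, w ^ n / (n : ℂ))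
      - ∑ n ∈ Finset.Icc 1 N, (ee s) ^ n / (n : ℂ)‖ ≤ 1/48 := by
    rw [← Finset.sum_sub_distrib]
    refine (norm_sum_le _ _).trans ?_
    have hterm : ∀ n ∈ Finset.Icc 1 N, ‖w ^ n / (n:ℂ) - (ee s) ^ n / (n:ℂ)‖ ≤ 1/(N:ℝ)^2 := by
      intro n hn
      rw [Finset.mem_Icc] at hn
      have hn1 : (1:ℝ) ≤ (n:ℝ) := by exact_mod_cast hn.1
      have hw_pow : w ^ n = ((r^n : ℝ):ℂ) * (ee s)^n := by
        rw [hwdef]; push_cast; ring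
      have hnum : ‖w ^ n - (ee s) ^ n‖ = |(r^n : ℝ) - 1| := by
        rw [hw_pow, show ((r^n : ℝ):ℂ) * (ee s)^n - (ee s)^n = (((r^n - 1 : ℝ)):ℂ) * (ee s)^n by
          push_cast; ring]
        rw [norm_mul, norm_pow, norm_ee, one_pow, mul_one, Complex.norm_real, Real.norm_eq_abs]
      have hber : 1 - (n:ℝ) * (1/(N:ℝ)^2) ≤ r^n := by
        have h8 := one_add_mul_le_pow (a := -(1/(N:ℝ)^2))
          (by nlinarith : (-2:ℝ) ≤ -(1/(N:ℝ)^2)) n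
        calc 1 - (n:ℝ) * (1/(N:ℝ)^2) = 1 + (n:ℝ) * (-(1/(N:ℝ)^2)) := by ring
          _ ≤ (1 + -(1/(N:ℝ)^2))^n := h8
          _ = r^n := by rw [hrdef]; ring_nf
      have hrn1 : r^n ≤ 1 := pow_le_one₀ hr0'.le hr1.le
      have habs : |(r^n : ℝ) - 1| ≤ (n:ℝ) * (1/(N:ℝ)^2) := by
        rw [abs_sub_comm, abs_of_nonneg (by linarith)]
        linarith
      rw [div_sub_div_same, norm_div, hnum, Complex.norm_natCast]
      rw [div_le_iff₀ (by linarith : (0:ℝ) < (n:ℝ))]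
      calc |(r^n : ℝ) - 1| ≤ (n:ℝ) * (1/(N:ℝ)^2) := habs
        _ = 1/(N:ℝ)^2 * (n:ℝ) := by ring
    refine (Finset.sum_le_sum hterm).trans ?_
    rw [Finset.sum_const, Nat.card_Icc]
    simp only [nsmul_eq_mul]
    have hcard : ((N + 1 - 1 : ℕ):ℝ) = (N:ℝ) := by norm_num
    rw [hcard, show (N:ℝ) * (1/(N:ℝ)^2) = 1/(N:ℝ) by field_simp]
    rw [div_le_div_iff₀ hNpos (by norm_num)]
    linarith
  have h1wne : (1:ℂ) - w ≠ 0 := by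
    intro h
    rw [h] at h1wpos; simp at h1wpos
  have hLconst : 3/8 ≤ ‖L‖ := by
    rcases le_or_gt ‖L‖ 1 with h | h
    · have hexp : Complex.exp (-L) = 1 - w := by
        rw [hLdef, neg_neg, Complex.exp_log h1wne]
      have habs1 : ‖-L‖ ≤ 1 := by
        rw [norm_neg]
        exact h
      have h7 := Complex.norm_exp_sub_one_le habs1
      rw [hexp] at h7
      have hh : ‖1 - w - 1‖ = r := by
        rw [show (1:ℂ) - w - 1 = -w by ring, norm_neg, hwn]
      rw [hh, norm_neg] at h7
      linarith
    · linarith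
  have hS : ‖L‖ - 1/12 ≤ ‖∑ n ∈ Finset.Icc 1 N, (ee s) ^ n / (n : ℂ)‖ := by
    have heq : L = (L - ∑ n ∈ Finset.Icc 1 N, w ^ n / (n : ℂ))
        + ((∑ n ∈ Finset.Icc 1 N, w ^ n / (n : ℂ)) - ∑ n ∈ Finset.Icc 1 N, (ee s) ^ n / (n : ℂ))
        + ∑ n ∈ Finset.Icc 1 N, (ee s) ^ n / (n : ℂ) := by ring
    have h1 : ‖L‖ ≤ ‖L - ∑ n ∈ Finset.Icc 1 N, w ^ n / (n : ℂ)‖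
        + ‖(∑ n ∈ Finset.Icc 1 N, w ^ n / (n : ℂ)) - ∑ n ∈ Finset.Icc 1 N, (ee s) ^ n / (n : ℂ)‖
        + ‖∑ n ∈ Finset.Icc 1 N, (ee s) ^ n / (n : ℂ)‖ := by
      calc ‖L‖ = ‖(L - ∑ n ∈ Finset.Icc 1 N, w ^ n / (n : ℂ))
            + ((∑ n ∈ Finset.Icc 1 N, w ^ n / (n : ℂ))
                - ∑ n ∈ Finset.Icc 1 N, (ee s) ^ n / (n : ℂ))
            + ∑ n ∈ Finset.Icc 1 N, (ee s) ^ n / (n : ℂ)‖ := by rw [← heq]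
        _ ≤ ‖(L - ∑ n ∈ Finset.Icc 1 N, w ^ n / (n : ℂ))
            + ((∑ n ∈ Finset.Icc 1 N, w ^ n / (n : ℂ))
                - ∑ n ∈ Finset.Icc 1 N, (ee s) ^ n / (n : ℂ))‖
            + ‖∑ n ∈ Finset.Icc 1 N, (ee s) ^ n / (n : ℂ)‖ := norm_add_le _ _
        _ ≤ _ := add_le_add_left (norm_add_le _ _) _
    linarith
  have hlogpos : (0:ℝ) < 1 + s⁻¹ := by positivity
  rcases le_or_gt s (1/160) with hcase | hcase
  · -- small s : use real part of log
    have hRe : -Real.log ‖1 - w‖ ≤ ‖L‖ := by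
      have h1 : |(Complex.log (1-w)).re| ≤ ‖Complex.log (1-w)‖ :=
        Complex.abs_re_le_norm _
      rw [Complex.log_re] at h1
      have h2 : ‖L‖ = ‖Complex.log (1-w)‖ := by rw [hLdef, norm_neg]
      rw [h2]
      calc -Real.log ‖1 - w‖ ≤ |Real.log ‖1 - w‖| := neg_le_abs _
        _ ≤ _ := h1
    have hlog8s : Real.log ‖1 - w‖ ≤ Real.log (8*s) :=
      Real.log_le_log h1wpos h1w_up
    have hXdef : Real.log (8*s) = 3 * Real.log 2 - Real.log s⁻¹ := by
      rw [show (8:ℝ)*s = 2^(3:ℕ) * s by norm_num, Real.log_mul (by norm_num) hs0.ne',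
        Real.log_pow, Real.log_inv]
      push_cast
      ring
    have hX5 : (5:ℝ) ≤ Real.log s⁻¹ := by
      refine le_log_of_le_exp (by positivity) ?_
      have : (160:ℝ) ≤ s⁻¹ := by
        rw [le_inv_comm₀ (by norm_num) hs0]
        linarith
      linarith [exp5_le]
    have hup : Real.log (1 + s⁻¹) ≤ Real.log 2 + Real.log s⁻¹ := by
      have h1 : (1:ℝ) ≤ s⁻¹ := by
        rw [le_inv_comm₀ (by norm_num) hs0]; linarith
      calc Real.log (1 + s⁻¹) ≤ Real.log (2 * s⁻¹) :=
            Real.log_le_log hlogpos (by linarith)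
        _ = Real.log 2 + Real.log s⁻¹ := Real.log_mul (by norm_num) (by positivity)
    have hl2 : (0:ℝ) ≤ Real.log 2 := Real.log_nonneg (by norm_num)
    linarith [log_two_le]
  · -- large s : constant bound
    have hlog161 : Real.log (1 + s⁻¹) ≤ 6 := by
      have hs160 : s⁻¹ ≤ 160 := by
        rw [inv_le_comm₀ hs0 (by norm_num)]
        linarith
      refine log_le_of_exp_le hlogpos ?_
      linarith [exp6_ge]
    linarith


private lemma dnint_nonneg (t : ℝ) : 0 ≤ dnint t := abs_nonneg _
private lemma dnint_le_half (t : ℝ) : dnint t ≤ 1/2 := abs_sub_round t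

/-- Lemma 4.3: two-sided estimate of the logarithmic kernel.  The upper bound
`min{1, c log(1+‖t‖^{-1})/log(1+N)}` holds for every `t` (with the convention
`‖t‖^{-1} = ∞` when `‖t‖ = 0`, expressed by the two clauses below) and the reverse
inequality holds for large `N` and `‖t‖ ≥ c''/N`. -/
theorem stmt_16 :
    (∃ c : ℝ, 0 < c ∧ ∀ N : ℕ, 1 ≤ N → ∀ t : ℝ,
      ‖logKern N t‖ ≤ 1 ∧
      (dnint t ≠ 0 →
        ‖logKern N t‖ ≤ c * Real.log (1 + (dnint t)⁻¹) / Real.log (1 + N)))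
    ∧
    (∃ c' : ℝ, 0 < c' ∧ ∃ c'' : ℝ, 0 < c'' ∧ ∃ N₀ : ℕ,
      ∀ N : ℕ, N₀ ≤ N → ∀ t : ℝ, c'' / N ≤ dnint t →
        c' * Real.log (1 + (dnint t)⁻¹) / Real.log (1 + N) ≤ ‖logKern N t‖) := by
  constructor
  · refine ⟨5/2, by norm_num, fun N hN t => ?_⟩
    have hHpos := Hsum_pos N hN
    have hs2 := dnint_le_half t
    have hs0 := dnint_nonneg t
    rw [norm_logKern]
    constructor
    · have h1 : ‖∑ n ∈ Finset.Icc 1 N, (ee (dnint t)) ^ n / (n : ℂ)‖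
          ≤ ∑ n ∈ Finset.Icc 1 N, (1:ℝ)/n := S_head N _ (norm_ee _)
      calc (∑ n ∈ Finset.Icc 1 N, (1:ℝ)/n)⁻¹ * ‖∑ n ∈ Finset.Icc 1 N, (ee (dnint t)) ^ n / (n : ℂ)‖
          ≤ (∑ n ∈ Finset.Icc 1 N, (1:ℝ)/n)⁻¹ * (∑ n ∈ Finset.Icc 1 N, (1:ℝ)/n) := by
            apply mul_le_mul_of_nonneg_left h1 (by positivity)
        _ = 1 := inv_mul_cancel₀ hHpos.ne'
    · intro hs
      have hs0' : 0 < dnint t := lt_of_le_of_ne hs0 (Ne.symm hs)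
      have hup := S_upper N hN (dnint t) hs0' hs2
      have hlogN : (0:ℝ) < Real.log (1 + N) := by
        apply Real.log_pos
        have : (1:ℝ) ≤ N := by exact_mod_cast hN
        linarith
      have hHlog : Real.log (1 + N) ≤ ∑ n ∈ Finset.Icc 1 N, (1:ℝ)/n := by
        rw [add_comm]
        exact le_Hsum N
      have hL1 : (0:ℝ) ≤ Real.log (1 + (dnint t)⁻¹) := Real.log_nonneg (by
        have : (0:ℝ) < (dnint t)⁻¹ := by positivity
        linarith)
      rw [inv_mul_eq_div]
      rw [mul_div_assoc]
      calc ‖∑ n ∈ Finset.Icc 1 N, (ee (dnint t)) ^ n / (n : ℂ)‖ / (∑ n ∈ Finset.Icc 1 N, (1:ℝ)/n)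
          ≤ (5/2 * Real.log (1 + (dnint t)⁻¹)) / Real.log (1 + N) :=
            div_le_div₀ (by positivity) hup hlogN hHlog
        _ = 5/2 * (Real.log (1 + (dnint t)⁻¹) / Real.log (1 + N)) := by ring
  · refine ⟨1/50, by norm_num, 24, by norm_num, 48, fun N hN t hst => ?_⟩
    have hs2 := dnint_le_half t
    have hs0 := dnint_nonneg t
    have hN1 : 1 ≤ N := by omega
    have hHpos := Hsum_pos N hN1
    have hNr : (48:ℝ) ≤ (N:ℝ) := by exact_mod_cast hN
    have hlow := S_lower N hN (dnint t) hst hs2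
    have hlogN : (1:ℝ) ≤ Real.log (1 + N) := by
      refine le_log_of_le_exp (by linarith) ?_
      linarith [exp1_le_3]
    have hlogN' : Real.log (N:ℝ) ≤ Real.log (1 + N) := by
      apply Real.log_le_log (by linarith)
      linarith
    have hH2 : ∑ n ∈ Finset.Icc 1 N, (1:ℝ)/n ≤ 2 * Real.log (1 + N) := by
      have := Hsum_le N hN1
      linarith
    have hL1 : (0:ℝ) ≤ Real.log (1 + (dnint t)⁻¹) := by
      apply Real.log_nonneg
      have hs0' : 0 < dnint t := lt_of_lt_of_le (by positivity) hst
      have : (0:ℝ) < (dnint t)⁻¹ := by positivity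
      linarith
    rw [norm_logKern, inv_mul_eq_div]
    have heq : (1:ℝ)/50 * Real.log (1 + (dnint t)⁻¹) / Real.log (1 + N)
        = (1/25 * Real.log (1 + (dnint t)⁻¹)) / (2 * Real.log (1 + N)) := by
      ring
    rw [heq]
    exact div_le_div₀ (by positivity) hlow hHpos hH2
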